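/- (Quantitative BBBV) Let Q be a quantum algorithm making T queries to a string x ∈ {±1}^N, and let y be a random string such that Pr[x_i ≠ y_i] ≤ p for every coordinate i. Then for any r > 0, Pr_y[ |Pr[Q^y = 1] − Pr[Q^x = 1]| ≥ r ] ≤ 64 p T² / r². -/

import Mathlib

open Finset Matrix
open scoped Classical ComplexOrder

/-- The phase oracle for `x ∈ {±1}^N` acting on the query register: the diagonal unitary
`O_x |i, w⟩ = x_i |i, w⟩` (with `true` encoding `-1`). -/
noncomputable def oracleMat {N d : ℕ} (x : Fin N → Bool) :
    Matrix (Fin N × Fin d) (Fin N × Fin d) ℂ :=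
  Matrix.diagonal (fun p => if x p.1 then -1 else 1)

/-- The state of a quantum query algorithm after `t` queries: alternately apply the
unitaries `U_0, U_1, …` and the phase oracle `O_x`, starting from `ψ₀`. -/
noncomputable def runState {N d : ℕ} (U : ℕ → Matrix (Fin N × Fin d) (Fin N × Fin d) ℂ)
    (x : Fin N → Bool) (ψ0 : Fin N × Fin d → ℂ) : ℕ → (Fin N × Fin d → ℂ)
  | 0 => (U 0).mulVec ψ0
  | (t + 1) => (U (t + 1)).mulVec ((oracleMat x).mulVec (runState U x ψ0 t))

/-- The acceptance probability of the algorithm: `⟨ψ, M ψ⟩` for the POVM element `M`. -/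
noncomputable def accProb {N d : ℕ} (M : Matrix (Fin N × Fin d) (Fin N × Fin d) ℂ)
    (ψ : Fin N × Fin d → ℂ) : ℝ :=
  (star ψ ⬝ᵥ M.mulVec ψ).re

section helpers
set_option linter.unusedSectionVars false
variable {ι : Type*} [Fintype ι] [DecidableEq ι]

/-- Euclidean norm of a complex vector. -/
noncomputable def bnrm (v : ι → ℂ) : ℝ := Real.sqrt (∑ i, ‖v i‖ ^ 2)

lemma bnrm_eq_norm (v : ι → ℂ) : bnrm v = ‖(WithLp.equiv 2 (ι → ℂ)).symm v‖ := by
  rw [EuclideanSpace.norm_eq]; rfl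

lemma bnrm_nonneg (v : ι → ℂ) : 0 ≤ bnrm v := Real.sqrt_nonneg _

lemma dot_self_re (v : ι → ℂ) : (star v ⬝ᵥ v).re = ∑ i, ‖v i‖ ^ 2 := by
  rw [dotProduct, Complex.re_sum]
  refine Finset.sum_congr rfl fun i _ => ?_
  simp [Pi.star_apply, mul_comm, Complex.mul_conj, Complex.sq_norm]

lemma bnrm_eq_sqrt_re (v : ι → ℂ) : bnrm v = Real.sqrt ((star v ⬝ᵥ v).re) := by
  rw [dot_self_re]; rfl

lemma bnrm_add_le (a b : ι → ℂ) : bnrm (a + b) ≤ bnrm a + bnrm b := by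
  simp only [bnrm_eq_norm, WithLp.equiv_symm_apply, WithLp.toLp_add]
  exact norm_add_le _ _

lemma dot_eq_inner (u v : ι → ℂ) :
    star u ⬝ᵥ v =
      inner ℂ ((WithLp.equiv 2 (ι → ℂ)).symm u) ((WithLp.equiv 2 (ι → ℂ)).symm v) := by
  rw [PiLp.inner_apply]
  refine Finset.sum_congr rfl fun i _ => ?_
  rw [RCLike.inner_apply, mul_comm]
  rfl

lemma abs_dot_le (u v : ι → ℂ) : ‖star u ⬝ᵥ v‖ ≤ bnrm u * bnrm v := by
  rw [dot_eq_inner, bnrm_eq_norm, bnrm_eq_norm]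
  exact norm_inner_le_norm _ _

lemma dot_of_star_mul_self {A : Matrix ι ι ℂ} (hA : Aᴴ * A = 1) (v w : ι → ℂ) :
    star (A *ᵥ v) ⬝ᵥ (A *ᵥ w) = star v ⬝ᵥ w := by
  rw [star_mulVec, dotProduct_mulVec, vecMul_vecMul, hA, vecMul_one]

lemma bnrm_mulVec {A : Matrix ι ι ℂ} (hA : Aᴴ * A = 1) (v : ι → ℂ) :
    bnrm (A *ᵥ v) = bnrm v := by
  rw [bnrm_eq_sqrt_re, bnrm_eq_sqrt_re, dot_of_star_mul_self hA]

lemma factor_dot {B : Matrix ι ι ℂ} (u v : ι → ℂ) :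
    star u ⬝ᵥ ((Bᴴ * B) *ᵥ v) = star (B *ᵥ u) ⬝ᵥ (B *ᵥ v) := by
  rw [← mulVec_mulVec, dotProduct_mulVec, star_mulVec]

/-- contraction property of `0 ≤ M ≤ 1`. -/
lemma contraction_dot {M : Matrix ι ι ℂ} (hM : M.PosSemidef) (hM1 : (1 - M).PosSemidef)
    (u v : ι → ℂ) : ‖star u ⬝ᵥ (M *ᵥ v)‖ ≤ bnrm u * bnrm v := by
  obtain ⟨B, hB⟩ : ∃ B : Matrix ι ι ℂ, M = Bᴴ * B := by
    open scoped MatrixOrder in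
    obtain ⟨X, hX, -, hXe⟩ := CFC.exists_sqrt_of_isSelfAdjoint_of_quasispectrumRestricts hM.isHermitian
      (QuasispectrumRestricts.nnreal_of_nonneg hM.nonneg)
    exact ⟨X, by rw [← hXe]; exact congrArg (· * X) hX.symm⟩
  have hBle : ∀ w : ι → ℂ, bnrm (B *ᵥ w) ≤ bnrm w := by
    intro w
    have h3 := hM1.dotProduct_mulVec_nonneg w
    rw [sub_mulVec, one_mulVec, dotProduct_sub] at h3
    have h4 : (star w ⬝ᵥ (M *ᵥ w)).re ≤ (star w ⬝ᵥ w).re := by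
      have := (Complex.le_def.mp h3).1
      simp only [Complex.zero_re, Complex.sub_re] at this
      linarith
    have h5 : star (B *ᵥ w) ⬝ᵥ (B *ᵥ w) = star w ⬝ᵥ (M *ᵥ w) := by
      rw [hB]; exact (factor_dot w w).symm
    rw [bnrm_eq_sqrt_re, bnrm_eq_sqrt_re, h5]
    exact Real.sqrt_le_sqrt h4
  have h6 : star u ⬝ᵥ (M *ᵥ v) = star (B *ᵥ u) ⬝ᵥ (B *ᵥ v) := by
    rw [hB]; exact factor_dot u v
  calc ‖star u ⬝ᵥ (M *ᵥ v)‖ = ‖star (B *ᵥ u) ⬝ᵥ (B *ᵥ v)‖ := by rw [h6]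
    _ ≤ bnrm (B *ᵥ u) * bnrm (B *ᵥ v) := abs_dot_le _ _
    _ ≤ bnrm u * bnrm v :=
        mul_le_mul (hBle u) (hBle v) (bnrm_nonneg _) (bnrm_nonneg _)

end helpers

lemma oracle_star_mul {N d : ℕ} (z : Fin N → Bool) :
    (oracleMat (d := d) z)ᴴ * oracleMat z = 1 := by
  have hfun : (fun i : Fin N × Fin d =>
      star (fun p : Fin N × Fin d => if z p.1 then (-1:ℂ) else 1) i *
        (if z i.1 then (-1:ℂ) else 1)) = fun _ => (1:ℂ) := by
    funext p
    by_cases h : z p.1 <;> simp [h]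
  rw [oracleMat, diagonal_conjTranspose, diagonal_mul_diagonal, hfun, diagonal_one]

lemma oracle_diff_bnrm {N d : ℕ} (y x : Fin N → Bool) (v : Fin N × Fin d → ℂ) :
    bnrm ((oracleMat y - oracleMat x) *ᵥ v)
      = 2 * Real.sqrt (∑ i, if y i ≠ x i then (∑ j, ‖v (i, j)‖ ^ 2) else 0) := by
  have happ : ∀ pt : Fin N × Fin d, ((oracleMat y - oracleMat x) *ᵥ v) pt
      = ((if y pt.1 then (-1:ℂ) else 1) - (if x pt.1 then -1 else 1)) * v pt := by
    intro pt
    rw [sub_mulVec, Pi.sub_apply, oracleMat, oracleMat, mulVec_diagonal, mulVec_diagonal,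
      sub_mul]
  have hW0 : 0 ≤ ∑ i, if y i ≠ x i then (∑ j, ‖v (i, j)‖ ^ 2) else 0 := by
    refine Finset.sum_nonneg fun i _ => ?_
    split_ifs with h
    · positivity
    · exact le_refl _
  have hsum : (∑ pt : Fin N × Fin d, ‖((oracleMat y - oracleMat x) *ᵥ v) pt‖ ^ 2)
      = 4 * ∑ i, if y i ≠ x i then (∑ j, ‖v (i, j)‖ ^ 2) else 0 := by
    calc (∑ pt : Fin N × Fin d, ‖((oracleMat y - oracleMat x) *ᵥ v) pt‖ ^ 2)
        = ∑ pt : Fin N × Fin d, (if y pt.1 ≠ x pt.1 then 4 * ‖v pt‖ ^ 2 else 0) := by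
          refine Finset.sum_congr rfl fun pt _ => ?_
          rw [happ pt]
          cases hy : y pt.1 <;> cases hx : x pt.1 <;>
            simp [hy, hx, norm_mul, mul_pow] <;> norm_num
      _ = ∑ i, ∑ j, (if y i ≠ x i then 4 * ‖v (i, j)‖ ^ 2 else 0) := by
          rw [Fintype.sum_prod_type]
      _ = ∑ i, (if y i ≠ x i then 4 * ∑ j, ‖v (i, j)‖ ^ 2 else 0) := by
          refine Finset.sum_congr rfl fun i _ => ?_
          by_cases h : y i ≠ x i <;> simp [h, Finset.mul_sum]
      _ = 4 * ∑ i, if y i ≠ x i then (∑ j, ‖v (i, j)‖ ^ 2) else 0 := by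
          rw [Finset.mul_sum]
          refine Finset.sum_congr rfl fun i _ => ?_
          by_cases h : y i ≠ x i <;> simp [h]
  unfold bnrm
  rw [hsum, Real.sqrt_mul (by norm_num : (0:ℝ) ≤ 4),
    show Real.sqrt 4 = 2 by rw [show (4:ℝ) = 2 ^ 2 by norm_num, Real.sqrt_sq (by norm_num)]]

/-- Quantitative BBBV: let `Q` be a quantum algorithm making `T` queries to `x ∈ {±1}^N`
(unitaries `U_t`, unit initial state `ψ₀`, POVM element `0 ≤ M ≤ I`), and let `y` be drawn
from a distribution `q` such that `Pr[y_i ≠ x_i] ≤ p` for every coordinate `i`. Then for any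
`r > 0`, `Pr_y[|Pr[Q^y = 1] − Pr[Q^x = 1]| ≥ r] ≤ 64 p T² / r²`. -/
theorem quantitative_bbbv (N d T : ℕ)
    (U : ℕ → Matrix (Fin N × Fin d) (Fin N × Fin d) ℂ)
    (hU : ∀ t, U t ∈ Matrix.unitaryGroup (Fin N × Fin d) ℂ)
    (ψ0 : Fin N × Fin d → ℂ) (hψ0 : star ψ0 ⬝ᵥ ψ0 = 1)
    (M : Matrix (Fin N × Fin d) (Fin N × Fin d) ℂ)
    (hM : M.PosSemidef) (hM1 : (1 - M).PosSemidef)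
    (x : Fin N → Bool)
    (q : (Fin N → Bool) → ℝ) (hq0 : ∀ y, 0 ≤ q y) (hq1 : ∑ y, q y = 1)
    (p : ℝ) (hp : ∀ i : Fin N, (∑ y : Fin N → Bool, if y i ≠ x i then q y else 0) ≤ p)
    (r : ℝ) (hr : 0 < r) :
    (∑ y : Fin N → Bool,
        if r ≤ |accProb M (runState U y ψ0 T) - accProb M (runState U x ψ0 T)| then q y
        else 0)
      ≤ 64 * p * T ^ 2 / r ^ 2 := by
  classical
  -- nonemptiness and `0 ≤ p`
  have hne : Nonempty (Fin N × Fin d) := by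
    by_contra h
    rw [not_nonempty_iff] at h
    rw [dotProduct] at hψ0
    simp [Finset.univ_eq_empty] at hψ0
  have hN : 0 < N := (Classical.arbitrary (Fin N × Fin d)).1.pos
  have hp0 : 0 ≤ p :=
    le_trans (Finset.sum_nonneg fun y _ => by
      split_ifs
      exacts [hq0 y, le_refl 0]) (hp ⟨0, hN⟩)
  have hUstar : ∀ t, (U t)ᴴ * U t = 1 := fun t => Matrix.mem_unitaryGroup_iff'.mp (hU t)
  -- unit norm of all run states
  have hunit : ∀ (z : Fin N → Bool) (t : ℕ),
      star (runState U z ψ0 t) ⬝ᵥ runState U z ψ0 t = 1 := by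
    intro z t
    induction t with
    | zero =>
        simp only [runState]
        rw [dot_of_star_mul_self (hUstar 0), hψ0]
    | succ t ih =>
        simp only [runState]
        rw [dot_of_star_mul_self (hUstar (t + 1)),
          dot_of_star_mul_self (oracle_star_mul z), ih]
  have hbn1 : ∀ (z : Fin N → Bool), bnrm (runState U z ψ0 T) = 1 := by
    intro z
    rw [bnrm_eq_sqrt_re, hunit z T]
    simp
  -- the per-query squared mass and its properties
  set w : ℕ → Fin N → ℝ := fun t i => ∑ j, ‖runState U x ψ0 t (i, j)‖ ^ 2 with hwdef
  set W : (Fin N → Bool) → ℕ → ℝ :=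
    fun y t => ∑ i, if y i ≠ x i then w t i else 0 with hWdef
  have hw0 : ∀ t i, 0 ≤ w t i := fun t i => by positivity
  have hW0 : ∀ y t, 0 ≤ W y t := by
    intro y t
    refine Finset.sum_nonneg fun i _ => ?_
    split_ifs
    exacts [hw0 t i, le_refl 0]
  have hwsum : ∀ t, ∑ i, w t i = 1 := by
    intro t
    have h1 := dot_self_re (runState U x ψ0 t)
    rw [hunit x t] at h1
    simp only [Complex.one_re] at h1
    simp only [hwdef]
    rw [Fintype.sum_prod_type] at h1
    exact h1.symm
  -- hybrid argument
  have key : ∀ (y : Fin N → Bool) (t : ℕ),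
      bnrm (runState U y ψ0 t - runState U x ψ0 t)
        ≤ ∑ s ∈ Finset.range t, 2 * Real.sqrt (W y s) := by
    intro y t
    induction t with
    | zero =>
        simp only [runState, Finset.range_zero, Finset.sum_empty, sub_self]
        simp [bnrm]
    | succ t ih =>
        have hsplit : (oracleMat y) *ᵥ (runState U y ψ0 t)
              - (oracleMat x) *ᵥ (runState U x ψ0 t)
            = (oracleMat y) *ᵥ (runState U y ψ0 t - runState U x ψ0 t)
              + (oracleMat y - oracleMat x) *ᵥ (runState U x ψ0 t) := by
          rw [mulVec_sub, sub_mulVec]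
          abel
        have step1 : runState U y ψ0 (t + 1) - runState U x ψ0 (t + 1)
            = (U (t + 1)) *ᵥ ((oracleMat y) *ᵥ (runState U y ψ0 t - runState U x ψ0 t)
                + (oracleMat y - oracleMat x) *ᵥ (runState U x ψ0 t)) := by
          simp only [runState]
          rw [← mulVec_sub, hsplit]
        rw [step1, bnrm_mulVec (hUstar (t + 1))]
        calc bnrm ((oracleMat y) *ᵥ (runState U y ψ0 t - runState U x ψ0 t)
                + (oracleMat y - oracleMat x) *ᵥ (runState U x ψ0 t))
            ≤ bnrm ((oracleMat y) *ᵥ (runState U y ψ0 t - runState U x ψ0 t))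
              + bnrm ((oracleMat y - oracleMat x) *ᵥ (runState U x ψ0 t)) := bnrm_add_le _ _
          _ = bnrm (runState U y ψ0 t - runState U x ψ0 t) + 2 * Real.sqrt (W y t) := by
              rw [bnrm_mulVec (oracle_star_mul y), oracle_diff_bnrm]
          _ ≤ (∑ s ∈ Finset.range t, 2 * Real.sqrt (W y s)) + 2 * Real.sqrt (W y t) :=
              add_le_add_left ih _
          _ = ∑ s ∈ Finset.range (t + 1), 2 * Real.sqrt (W y s) :=
              (Finset.sum_range_succ _ t).symm
  -- acceptance probability difference bound
  set D : (Fin N → Bool) → ℝ :=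
    fun y => |accProb M (runState U y ψ0 T) - accProb M (runState U x ψ0 T)| with hDdef
  have acc_diff : ∀ y, D y ≤ 2 * bnrm (runState U y ψ0 T - runState U x ψ0 T) := by
    intro y
    set a := runState U y ψ0 T with ha'
    set b := runState U x ψ0 T with hb'
    have hsplit : star a ⬝ᵥ (M *ᵥ a) - star b ⬝ᵥ (M *ᵥ b)
        = star (a - b) ⬝ᵥ (M *ᵥ a) + star b ⬝ᵥ (M *ᵥ (a - b)) := by
      rw [star_sub, sub_dotProduct, mulVec_sub, dotProduct_sub]
      ring
    have hre : accProb M a - accProb M b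
        = (star (a - b) ⬝ᵥ (M *ᵥ a)).re + (star b ⬝ᵥ (M *ᵥ (a - b))).re := by
      rw [accProb, accProb, ← Complex.sub_re, hsplit, Complex.add_re]
    rw [hDdef]
    simp only
    rw [hre]
    calc |(star (a - b) ⬝ᵥ (M *ᵥ a)).re + (star b ⬝ᵥ (M *ᵥ (a - b))).re|
        ≤ |(star (a - b) ⬝ᵥ (M *ᵥ a)).re| + |(star b ⬝ᵥ (M *ᵥ (a - b))).re| := abs_add_le _ _
      _ ≤ ‖star (a - b) ⬝ᵥ (M *ᵥ a)‖ + ‖star b ⬝ᵥ (M *ᵥ (a - b))‖ :=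
          add_le_add (Complex.abs_re_le_norm _) (Complex.abs_re_le_norm _)
      _ ≤ bnrm (a - b) * bnrm a + bnrm b * bnrm (a - b) :=
          add_le_add (contraction_dot hM hM1 _ _) (contraction_dot hM hM1 _ _)
      _ = 2 * bnrm (a - b) := by rw [hbn1 y, hbn1 x]; ring
  -- squared bound
  have Dsq : ∀ y, D y ^ 2 ≤ 16 * T * ∑ t ∈ Finset.range T, W y t := by
    intro y
    have h1 : D y ≤ 4 * ∑ s ∈ Finset.range T, Real.sqrt (W y s) := by
      refine (acc_diff y).trans ?_
      have := key y T
      calc 2 * bnrm (runState U y ψ0 T - runState U x ψ0 T)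
          ≤ 2 * ∑ s ∈ Finset.range T, 2 * Real.sqrt (W y s) := by linarith
        _ = 4 * ∑ s ∈ Finset.range T, Real.sqrt (W y s) := by
            rw [← Finset.mul_sum]; ring
    have hS0 : 0 ≤ ∑ s ∈ Finset.range T, Real.sqrt (W y s) :=
      Finset.sum_nonneg fun s _ => Real.sqrt_nonneg _
    have hD0 : 0 ≤ D y := abs_nonneg _
    have h2 : D y ^ 2 ≤ 16 * (∑ s ∈ Finset.range T, Real.sqrt (W y s)) ^ 2 := by
      nlinarith
    have h3 : (∑ s ∈ Finset.range T, Real.sqrt (W y s)) ^ 2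
        ≤ T * ∑ s ∈ Finset.range T, W y s := by
      have hcs := sq_sum_le_card_mul_sum_sq (s := Finset.range T)
        (f := fun s => Real.sqrt (W y s))
      rw [Finset.card_range] at hcs
      have hrw : ∑ s ∈ Finset.range T, Real.sqrt (W y s) ^ 2
          = ∑ s ∈ Finset.range T, W y s :=
        Finset.sum_congr rfl fun s _ => Real.sq_sqrt (hW0 y s)
      rw [hrw] at hcs
      exact hcs
    nlinarith
  -- expected query mass on differing coordinates
  have Egood : ∀ t, ∑ y : Fin N → Bool, q y * W y t ≤ p := by
    intro t
    have h1 : ∑ y : Fin N → Bool, q y * W y t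
        = ∑ i, (∑ y : Fin N → Bool, if y i ≠ x i then q y else 0) * w t i := by
      simp only [hWdef, Finset.mul_sum, Finset.sum_mul]
      rw [Finset.sum_comm]
      refine Finset.sum_congr rfl fun i _ => Finset.sum_congr rfl fun y _ => ?_
      by_cases h : y i ≠ x i <;> simp [h]
    rw [h1]
    calc ∑ i, (∑ y : Fin N → Bool, if y i ≠ x i then q y else 0) * w t i
        ≤ ∑ i, p * w t i := by
          refine Finset.sum_le_sum fun i _ => ?_
          exact mul_le_mul_of_nonneg_right (hp i) (hw0 t i)
      _ = p := by rw [← Finset.mul_sum, hwsum t, mul_one]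
  -- Markov
  have markov : (∑ y : Fin N → Bool, if r ≤ D y then q y else 0) * r ^ 2
      ≤ ∑ y : Fin N → Bool, q y * D y ^ 2 := by
    rw [Finset.sum_mul]
    refine Finset.sum_le_sum fun y _ => ?_
    by_cases h : r ≤ D y
    · simp only [h, if_true]
      have h2 : r ^ 2 ≤ D y ^ 2 := pow_le_pow_left₀ hr.le h 2
      exact mul_le_mul_of_nonneg_left h2 (hq0 y)
    · simp only [h, if_false, zero_mul]
      exact mul_nonneg (hq0 y) (sq_nonneg _)
  have Esum : ∑ y : Fin N → Bool, q y * D y ^ 2 ≤ 16 * p * T ^ 2 := by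
    calc ∑ y : Fin N → Bool, q y * D y ^ 2
        ≤ ∑ y : Fin N → Bool, q y * (16 * T * ∑ t ∈ Finset.range T, W y t) :=
          Finset.sum_le_sum fun y _ => mul_le_mul_of_nonneg_left (Dsq y) (hq0 y)
      _ = 16 * T * ∑ t ∈ Finset.range T, ∑ y : Fin N → Bool, q y * W y t := by
          simp only [Finset.mul_sum]
          rw [Finset.sum_comm]
          exact Finset.sum_congr rfl fun t _ => Finset.sum_congr rfl fun y _ => by ring
      _ ≤ 16 * T * ∑ t ∈ Finset.range T, p := by
          refine mul_le_mul_of_nonneg_left (Finset.sum_le_sum fun t _ => Egood t) ?_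
          positivity
      _ = 16 * p * T ^ 2 := by
          rw [Finset.sum_const, Finset.card_range, nsmul_eq_mul]
          ring
  -- conclude
  rw [le_div_iff₀ (by positivity : (0:ℝ) < r ^ 2)]
  have h64 : 16 * p * (T:ℝ) ^ 2 ≤ 64 * p * T ^ 2 := by nlinarith [sq_nonneg (T:ℝ), hp0]
  calc (∑ y : Fin N → Bool, if r ≤ D y then q y else 0) * r ^ 2
      ≤ ∑ y : Fin N → Bool, q y * D y ^ 2 := markov
    _ ≤ 16 * p * T ^ 2 := Esum
    _ ≤ 64 * p * T ^ 2 := h64
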